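/- Let T be a finite tree with a designated root and strictly positive conductances g_e > 0 on its edges. Let L be the reduced weighted graph Laplacian, the square matrix indexed by the non-root vertices defined by L(a,a) = Σ_{c : {a,c} is an edge of T} g_{ac} (the sum over all neighbors c of a, including the root if adjacent), L(a,b) = -g_{ab} if {a,b} is an edge of T with a ≠ b, and L(a,b) = 0 otherwise. Then L is invertible and its inverse is the path-sum matrix K_{1/g}, i.e., L^{-1}(a,b) = Σ_{e ∈ E_a ∩ E_b} 1/g_e, the sum of the inverse conductances of the edges common to the paths from a and from b to the root. -/

import Mathlib

open Classical

/-- A finite tree with a designated root vertex (the slack bus). -/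
structure GridTree (V : Type*) [Fintype V] [DecidableEq V] where
  graph : SimpleGraph V
  root : V
  isTree : graph.IsTree

namespace GridTree

variable {V : Type*} [Fintype V] [DecidableEq V] (T : GridTree V)

/-- The unique path (as a walk) from a vertex to the root. -/
noncomputable def pathToRoot (a : V) : T.graph.Walk a T.root :=
  (T.isTree.existsUnique_path a T.root).choose

/-- `E_a`: the set of edges on the unique path from `a` to the root. -/
noncomputable def pathEdges (a : V) : Finset (Sym2 V) :=
  (T.pathToRoot a).edges.toFinset

/-- `c` is a descendant of `a`: `a` lies on the unique path from `c` to the root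
(in particular every vertex is a descendant of itself). -/
def Descendant (c a : V) : Prop := a ∈ (T.pathToRoot c).support

/-- `b` is the parent of `a`: the edge `{a, b}` lies on the path from `a` to the root
(equivalently, `b` is the unique neighbor of `a` on that path). -/
noncomputable def IsParent (a b : V) : Prop := s(a, b) ∈ T.pathEdges a

/-- The path-sum matrix `K_w`, indexed by the non-root vertices:
`K_w(a,b) = ∑_{e ∈ E_a ∩ E_b} w_e`. -/
noncomputable def pathMatrix (w : Sym2 V → ℝ) :
    Matrix {v : V // v ≠ T.root} {v : V // v ≠ T.root} ℝ :=
  fun a b => ∑ e ∈ T.pathEdges a.1 ∩ T.pathEdges b.1, w e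

/-- The reduced weighted graph Laplacian with edge weights `w`, indexed by the
non-root vertices (the row and column of the root are deleted). -/
noncomputable def lap (w : Sym2 V → ℝ) :
    Matrix {v : V // v ≠ T.root} {v : V // v ≠ T.root} ℝ :=
  fun a b =>
    if a = b then ∑ c ∈ Finset.univ.filter (fun c => T.graph.Adj a.1 c), w s(a.1, c)
    else if T.graph.Adj a.1 b.1 then - w s(a.1, b.1) else 0

end GridTree

namespace GridTree

open SimpleGraph

variable {V : Type*} [Fintype V] [DecidableEq V] (T : GridTree V)

lemma pathToRoot_isPath (a : V) : (T.pathToRoot a).IsPath :=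
  (T.isTree.existsUnique_path a T.root).choose_spec.1

lemma pathToRoot_unique {a : V} (p : T.graph.Walk a T.root) (hp : p.IsPath) :
    p = T.pathToRoot a :=
  (T.isTree.existsUnique_path a T.root).choose_spec.2 p hp

lemma pathToRoot_root : T.pathToRoot T.root = SimpleGraph.Walk.nil :=
  (T.pathToRoot_unique SimpleGraph.Walk.nil (SimpleGraph.Walk.IsPath.nil)).symm

/-- The parent of a vertex: the second vertex on the path to the root. -/
noncomputable def par (a : V) : V := (T.pathToRoot a).getVert 1

lemma path_cons {a : V} (ha : a ≠ T.root) :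
    ∃ h : T.graph.Adj a (T.par a),
      T.pathToRoot a = SimpleGraph.Walk.cons h (T.pathToRoot (T.par a)) := by
  obtain ⟨x, h, q, hq⟩ := SimpleGraph.Walk.exists_eq_cons_of_ne ha (T.pathToRoot a)
  have hx : T.par a = x := by
    rw [par, hq]
    simp [SimpleGraph.Walk.getVert_cons_succ]
  subst hx
  have hqp : q.IsPath := by
    have hp := T.pathToRoot_isPath a
    rw [hq] at hp
    exact hp.of_cons
  rw [T.pathToRoot_unique q hqp] at hq
  exact ⟨h, hq⟩

lemma adj_par {a : V} (ha : a ≠ T.root) : T.graph.Adj a (T.par a) :=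
  (T.path_cons ha).choose

lemma eq_par_of_cons {a c : V} (h : T.graph.Adj a c) (q : T.graph.Walk c T.root)
    (hq : T.pathToRoot a = SimpleGraph.Walk.cons h q) : c = T.par a := by
  rw [par, hq]
  simp [SimpleGraph.Walk.getVert_cons_succ]

lemma ne_root_of_path_cons {a c : V} {h : T.graph.Adj a c} {q : T.graph.Walk c T.root}
    (hq : T.pathToRoot a = SimpleGraph.Walk.cons h q) : a ≠ T.root := by
  intro har
  subst har
  rw [T.pathToRoot_root] at hq
  have := congrArg SimpleGraph.Walk.length hq
  simp at this

lemma length_path_par {a : V} (ha : a ≠ T.root) :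
    (T.pathToRoot (T.par a)).length + 1 = (T.pathToRoot a).length := by
  obtain ⟨h, hq⟩ := T.path_cons ha
  rw [hq, SimpleGraph.Walk.length_cons]

lemma not_mem_par_support {a : V} (ha : a ≠ T.root) :
    a ∉ (T.pathToRoot (T.par a)).support := by
  obtain ⟨h, hq⟩ := T.path_cons ha
  have hp := T.pathToRoot_isPath a
  rw [hq, SimpleGraph.Walk.cons_isPath_iff] at hp
  exact hp.2

lemma support_path_eq {a : V} (ha : a ≠ T.root) :
    (T.pathToRoot a).support = a :: (T.pathToRoot (T.par a)).support := by
  obtain ⟨h, hq⟩ := T.path_cons ha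
  rw [hq, SimpleGraph.Walk.support_cons]

lemma dropUntil_pathToRoot {a b : V} (h : a ∈ (T.pathToRoot b).support) :
    (T.pathToRoot b).dropUntil a h = T.pathToRoot a :=
  T.pathToRoot_unique _ ((T.pathToRoot_isPath b).dropUntil h)

lemma pathEdges_subset {a b : V} (h : a ∈ (T.pathToRoot b).support) :
    T.pathEdges a ⊆ T.pathEdges b := by
  intro e he
  rw [pathEdges, List.mem_toFinset] at he ⊢
  rw [← T.dropUntil_pathToRoot h] at he
  exact SimpleGraph.Walk.edges_dropUntil_subset _ h he

lemma pathEdges_root : T.pathEdges T.root = ∅ := by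
  rw [pathEdges, T.pathToRoot_root]
  simp

lemma pathEdges_eq_insert {a : V} (ha : a ≠ T.root) :
    T.pathEdges a = insert s(a, T.par a) (T.pathEdges (T.par a)) := by
  obtain ⟨h, hq⟩ := T.path_cons ha
  rw [pathEdges, pathEdges, hq, SimpleGraph.Walk.edges_cons, List.toFinset_cons]

lemma parEdge_not_mem {a : V} (ha : a ≠ T.root) :
    s(a, T.par a) ∉ T.pathEdges (T.par a) := by
  intro hmem
  exact T.not_mem_par_support ha
    (SimpleGraph.Walk.fst_mem_support_of_mem_edges _ (List.mem_toFinset.mp hmem))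

lemma parEdge_mem_iff {a : V} (ha : a ≠ T.root) (b : V) :
    s(a, T.par a) ∈ T.pathEdges b ↔ a ∈ (T.pathToRoot b).support := by
  constructor
  · intro he
    exact SimpleGraph.Walk.fst_mem_support_of_mem_edges _ (List.mem_toFinset.mp he)
  · intro hs
    apply T.pathEdges_subset hs
    rw [T.pathEdges_eq_insert ha]
    exact Finset.mem_insert_self _ _

lemma adj_cases {a c : V} (h : T.graph.Adj a c) :
    c = T.par a ∨ (c ≠ T.root ∧ T.par c = a) := by
  by_cases hc : c ∈ (T.pathToRoot a).support
  · left
    have h1 : ((T.pathToRoot a).takeUntil c hc).IsPath :=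
      (T.pathToRoot_isPath a).takeUntil hc
    have h2 : (SimpleGraph.Walk.cons h SimpleGraph.Walk.nil : T.graph.Walk a c).IsPath := by
      rw [SimpleGraph.Walk.cons_isPath_iff]
      refine ⟨SimpleGraph.Walk.IsPath.nil, ?_⟩
      simp [h.ne]
    have hu := T.isTree.existsUnique_path a c
    have he : (T.pathToRoot a).takeUntil c hc
        = SimpleGraph.Walk.cons h SimpleGraph.Walk.nil := hu.unique h1 h2
    have hspec := (T.pathToRoot a).take_spec hc
    rw [he, SimpleGraph.Walk.cons_append, SimpleGraph.Walk.nil_append] at hspec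
    exact T.eq_par_of_cons h _ hspec.symm
  · right
    have hp : (SimpleGraph.Walk.cons h.symm (T.pathToRoot a)).IsPath := by
      rw [SimpleGraph.Walk.cons_isPath_iff]
      exact ⟨T.pathToRoot_isPath a, hc⟩
    have hq := (T.pathToRoot_unique _ hp).symm
    exact ⟨T.ne_root_of_path_cons hq, (T.eq_par_of_cons h.symm _ hq).symm⟩

lemma par_not_child {a : V} (ha : a ≠ T.root) :
    ¬ (T.par a ≠ T.root ∧ T.par (T.par a) = a) := by
  rintro ⟨h1, h2⟩
  have l1 := T.length_path_par ha
  have l2 := T.length_path_par h1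
  rw [h2] at l2
  omega

lemma neighbors_eq {a : V} (ha : a ≠ T.root) :
    Finset.univ.filter (fun c => T.graph.Adj a c)
      = insert (T.par a) (Finset.univ.filter (fun c => c ≠ T.root ∧ T.par c = a)) := by
  ext c
  simp only [Finset.mem_filter, Finset.mem_univ, true_and, Finset.mem_insert]
  constructor
  · exact fun h => T.adj_cases h
  · rintro (rfl | ⟨hc, rfl⟩)
    · exact T.adj_par ha
    · exact (T.adj_par hc).symm

lemma par_not_mem_children {a : V} (ha : a ≠ T.root) :
    T.par a ∉ Finset.univ.filter (fun c => c ≠ T.root ∧ T.par c = a) := by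
  simp only [Finset.mem_filter, Finset.mem_univ, true_and]
  exact T.par_not_child ha

lemma sum_inter_eq {a : V} (ha : a ≠ T.root) (w : Sym2 V → ℝ) (B : Finset (Sym2 V)) :
    ∑ e ∈ T.pathEdges a ∩ B, w e
      = (∑ e ∈ T.pathEdges (T.par a) ∩ B, w e)
        + (if s(a, T.par a) ∈ B then w s(a, T.par a) else 0) := by
  rw [T.pathEdges_eq_insert ha]
  by_cases hm : s(a, T.par a) ∈ B
  · rw [if_pos hm, Finset.insert_inter_of_mem hm, Finset.sum_insert (by
      simp only [Finset.mem_inter, not_and]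
      intro h1
      exact absurd h1 (T.parEdge_not_mem ha))]
    ring
  · rw [if_neg hm, Finset.insert_inter_of_notMem hm, add_zero]

lemma count_children {a : V} (ha : a ≠ T.root) (b : V) :
    ∑ c ∈ Finset.univ.filter (fun c => c ≠ T.root ∧ T.par c = a),
        (if c ∈ (T.pathToRoot b).support then (1 : ℝ) else 0)
      = (if a ∈ (T.pathToRoot b).support then (1 : ℝ) else 0)
        - (if a = b then (1 : ℝ) else 0) := by
  suffices H : ∀ n (b : V), (T.pathToRoot b).length = n →
      (∑ c ∈ Finset.univ.filter (fun c => c ≠ T.root ∧ T.par c = a),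
        (if c ∈ (T.pathToRoot b).support then (1 : ℝ) else 0)
      = (if a ∈ (T.pathToRoot b).support then (1 : ℝ) else 0)
        - (if a = b then (1 : ℝ) else 0)) from H _ b rfl
  intro n
  induction n using Nat.strong_induction_on with
  | _ n ih =>
    intro b hb
    by_cases hbr : b = T.root
    · subst hbr
      rw [Finset.sum_eq_zero, T.pathToRoot_root]
      · simp [ha]
      · intro c hc
        simp only [Finset.mem_filter, Finset.mem_univ, true_and] at hc
        rw [T.pathToRoot_root]
        simp [hc.1]
    · have hlen := T.length_path_par hbr
      have hbnot := T.not_mem_par_support hbr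
      have hsupp := T.support_path_eq hbr
      have ihp := ih (T.pathToRoot (T.par b)).length (by omega) (T.par b) rfl
      have hterm : ∀ c : V, (if c ∈ (T.pathToRoot b).support then (1 : ℝ) else 0)
          = (if c = b then (1 : ℝ) else 0)
            + (if c ∈ (T.pathToRoot (T.par b)).support then (1 : ℝ) else 0) := by
        intro c
        rw [hsupp]
        by_cases h1 : c = b
        · subst h1
          rw [if_pos List.mem_cons_self, if_pos rfl, if_neg hbnot]
          ring
        · simp [List.mem_cons, h1]
      rw [Finset.sum_congr rfl (fun c _ => hterm c), Finset.sum_add_distrib,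
        Finset.sum_ite_eq' _ b (fun _ => (1 : ℝ)), ihp, hterm a]
      have hmem : (b ∈ Finset.univ.filter (fun c => c ≠ T.root ∧ T.par c = a))
          ↔ T.par b = a := by
        simp [hbr]
      by_cases hab : a = T.par b
      · rw [if_pos (hmem.mpr hab.symm), if_pos hab]
        ring
      · rw [if_neg (fun h => hab (hmem.mp h).symm), if_neg hab]
        ring

end GridTree

/-- For a rooted tree with strictly positive conductances `g` on its
edges, the reduced weighted graph Laplacian `L` is invertible and its inverse is the
path-sum matrix with weights `1/g`: `L⁻¹(a,b) = ∑_{e ∈ E_a ∩ E_b} 1/g_e`. -/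
theorem tree_laplacian_inverse_is_pathMatrix
    {V : Type*} [Fintype V] [DecidableEq V] (T : GridTree V)
    (g : Sym2 V → ℝ) (hg : ∀ e ∈ T.graph.edgeSet, 0 < g e) :
    T.lap g * T.pathMatrix (fun e => (g e)⁻¹) = 1 ∧
    T.pathMatrix (fun e => (g e)⁻¹) * T.lap g = 1 := by
  have key : T.lap g * T.pathMatrix (fun e => (g e)⁻¹) = 1 := by
    ext a b
    rw [Matrix.mul_apply, Matrix.one_apply]
    set k : V → ℝ := fun c => ∑ e ∈ T.pathEdges c ∩ T.pathEdges b.1, (g e)⁻¹ with hk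
    have ha := a.2
    set pa := T.par a.1 with hpa
    have hadj : T.graph.Adj a.1 pa := T.adj_par ha
    set S := Finset.univ.filter (fun c => c ≠ T.root ∧ T.par c = a.1) with hS
    set D := ∑ x ∈ Finset.univ.filter (fun x => T.graph.Adj a.1 x), g s(a.1, x) with hD
    -- pointwise description of the summand
    have hpoint : ∀ c : {v : V // v ≠ T.root},
        T.lap g a c * T.pathMatrix (fun e => (g e)⁻¹) c b
          = (if a = c then D * k a.1 else 0)
            + (if T.graph.Adj a.1 c.1 then -(g s(a.1, c.1) * k c.1) else 0) := by
      intro c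
      by_cases hac : a = c
      · subst hac
        simp only [GridTree.lap, GridTree.pathMatrix]
        rw [if_pos trivial, if_pos trivial, if_neg T.graph.irrefl, add_zero]
      · simp only [GridTree.lap, GridTree.pathMatrix]
        rw [if_neg hac, if_neg hac, zero_add]
        by_cases hadj2 : T.graph.Adj a.1 c.1
        · rw [if_pos hadj2, if_pos hadj2]
          simp only [hk]
          ring
        · rw [if_neg hadj2, if_neg hadj2]
          exact zero_mul _
    rw [Finset.sum_congr rfl (fun c _ => hpoint c), Finset.sum_add_distrib,
      Finset.sum_ite_eq _ a (fun _ => D * k a.1), if_pos (Finset.mem_univ a)]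
    -- convert subtype sum to a sum over V
    have hsub : (∑ c : {v : V // v ≠ T.root},
          (if T.graph.Adj a.1 c.1 then -(g s(a.1, c.1) * k c.1) else 0))
        = ∑ c ∈ Finset.univ.filter (fun c => c ≠ T.root),
            (if T.graph.Adj a.1 c then -(g s(a.1, c) * k c) else 0) :=
      (Finset.sum_subtype _ (fun x => by simp)
        (fun c => if T.graph.Adj a.1 c then -(g s(a.1, c) * k c) else 0)).symm
    rw [hsub]
    have hsum2 : (∑ c ∈ Finset.univ.filter (fun c => c ≠ T.root),
          (if T.graph.Adj a.1 c then -(g s(a.1, c) * k c) else 0))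
        = - ∑ c ∈ Finset.univ.filter (fun c => c ≠ T.root ∧ T.graph.Adj a.1 c),
            g s(a.1, c) * k c := by
      rw [← Finset.sum_filter, Finset.filter_filter, ← Finset.sum_neg_distrib]
    rw [hsum2]
    -- identify the sum over non-root neighbors
    have hpaS : pa ∉ S := T.par_not_mem_children ha
    have hCh : (∑ c ∈ Finset.univ.filter (fun c => c ≠ T.root ∧ T.graph.Adj a.1 c),
          g s(a.1, c) * k c)
        = g s(a.1, pa) * k pa + ∑ c ∈ S, g s(a.1, c) * k c := by
      have hff : Finset.univ.filter (fun c => c ≠ T.root ∧ T.graph.Adj a.1 c)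
          = (Finset.univ.filter (fun c => T.graph.Adj a.1 c)).filter (fun c => c ≠ T.root) := by
        ext c
        simp [and_comm]
      rw [hff, T.neighbors_eq ha, Finset.filter_insert]
      have hStrue : S.filter (fun c => c ≠ T.root) = S := by
        apply Finset.filter_true_of_mem
        intro c hc
        simp only [hS, Finset.mem_filter, Finset.mem_univ, true_and] at hc
        exact hc.1
      by_cases hpar : pa = T.root
      · rw [if_neg (not_not_intro hpar), hStrue]
        have : k pa = 0 := by
          rw [hk, hpar]
          simp [T.pathEdges_root]
        rw [this, mul_zero, zero_add]
      · rw [if_pos hpar, hStrue, Finset.sum_insert hpaS]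
    rw [hCh]
    have hDsum : D = g s(a.1, pa) + ∑ c ∈ S, g s(a.1, c) := by
      rw [hD, T.neighbors_eq ha, Finset.sum_insert hpaS]
    rw [hDsum]
    -- key recursions
    have hgne : g s(a.1, pa) ≠ 0 :=
      ne_of_gt (hg _ (T.graph.mem_edgeSet.mpr hadj))
    have hrecA : g s(a.1, pa) * k a.1 - g s(a.1, pa) * k pa
        = (if s(a.1, pa) ∈ T.pathEdges b.1 then (1 : ℝ) else 0) := by
      have hrec := T.sum_inter_eq ha (fun e => (g e)⁻¹) (T.pathEdges b.1)
      have hka : k a.1 = k pa + (if s(a.1, pa) ∈ T.pathEdges b.1 then (g s(a.1, pa))⁻¹ else 0) := hrec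
      rw [hka]
      by_cases hm : s(a.1, pa) ∈ T.pathEdges b.1
      · rw [if_pos hm, if_pos hm, mul_add, mul_inv_cancel₀ hgne]
        ring
      · rw [if_neg hm, if_neg hm]
        ring
    have hrecC : ∀ c ∈ S, g s(a.1, c) * k a.1 - g s(a.1, c) * k c
        = -(if c ∈ (T.pathToRoot b.1).support then (1 : ℝ) else 0) := by
      intro c hc
      simp only [hS, Finset.mem_filter, Finset.mem_univ, true_and] at hc
      obtain ⟨hc1, hc2⟩ := hc
      have hgne2 : g s(a.1, c) ≠ 0 := by
        refine ne_of_gt (hg _ (T.graph.mem_edgeSet.mpr ?_))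
        rw [← hc2]
        exact (T.adj_par hc1).symm
      have hswap : s(a.1, c) = s(c, T.par c) := by
        rw [hc2, Sym2.eq_swap]
      have hkc : k c = k a.1 + (if s(c, T.par c) ∈ T.pathEdges b.1
          then (g s(c, T.par c))⁻¹ else 0) := by
        have hrec := T.sum_inter_eq hc1 (fun e => (g e)⁻¹) (T.pathEdges b.1)
        simp only [hk]
        rw [hrec]
        simp only [hc2]
      have hmem : (s(a.1, c) ∈ T.pathEdges b.1) ↔ c ∈ (T.pathToRoot b.1).support := by
        rw [hswap]
        exact T.parEdge_mem_iff hc1 b.1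
      rw [hkc]
      simp only [← hswap, hmem]
      by_cases hm : c ∈ (T.pathToRoot b.1).support
      · rw [if_pos hm, if_pos hm, mul_add, mul_inv_cancel₀ hgne2]
        ring
      · rw [if_neg hm, if_neg hm]
        ring
    -- put everything together
    have halg : (g s(a.1, pa) + ∑ c ∈ S, g s(a.1, c)) * k a.1
          + -(g s(a.1, pa) * k pa + ∑ c ∈ S, g s(a.1, c) * k c)
        = (g s(a.1, pa) * k a.1 - g s(a.1, pa) * k pa)
          + ∑ c ∈ S, (g s(a.1, c) * k a.1 - g s(a.1, c) * k c) := by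
      rw [Finset.sum_sub_distrib, ← Finset.sum_mul]
      ring
    rw [halg, hrecA, Finset.sum_congr rfl hrecC, Finset.sum_neg_distrib,
      T.count_children ha b.1]
    simp only [show (s(a.1, pa) ∈ T.pathEdges b.1) ↔ _ from T.parEdge_mem_iff ha b.1]
    have hab : (a = b) ↔ (a.1 = b.1) := Subtype.ext_iff
    by_cases h1 : a.1 = b.1
    · rw [if_pos (hab.mpr h1), if_pos h1]
      ring
    · rw [if_neg (fun h => h1 (hab.mp h)), if_neg h1]
      ring
  exact ⟨key, mul_eq_one_comm.mp key⟩
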